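/- Fix c ∈ ℝ and define Ψ : ℝ³ → ℝ by Ψ(x) = ∫_c^{φ_x} a(t) dt. Then Ψ is infinitely differentiable (C^∞) on the open set ℝ³ ∖ {0}; in particular it is smooth even at points of the x₃-axis, where arccos itself fails to be differentiable, because a vanishes near the endpoints 0 and π. -/

import Mathlib

open Real MeasureTheory Filter
open scoped RealInnerProductSpace Topology

noncomputable section

/-- `ℝ³` as a Euclidean space. -/
abbrev E3 := EuclideanSpace ℝ (Fin 3)

/-- The colatitude `φ_x = arccos(x₃/|x|)` of a point of `ℝ³`. -/
def colat (x : E3) : ℝ := Real.arccos (x 2 / ‖x‖)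

/-- The unit vector `e_{φ_x}` of spherical coordinates. -/
def ephi (x : E3) : E3 :=
  (1 / ‖x‖) • (WithLp.equiv 2 (Fin 3 → ℝ)).symm
    ![x 0 * x 2 / Real.sqrt ((x 0)^2 + (x 1)^2),
      x 1 * x 2 / Real.sqrt ((x 0)^2 + (x 1)^2),
      - Real.sqrt ((x 0)^2 + (x 1)^2)]

/-- The magnetic potential `A(x) = (a(φ_x)/|x|) e_{φ_x}` (set to `0` on the `x₃`-axis). -/
def magA (a : ℝ → ℝ) (x : E3) : E3 :=
  if 0 < (x 0)^2 + (x 1)^2 then (a (colat x) / ‖x‖) • ephi x else 0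

lemma norm_sq_E3 (x : E3) : ‖x‖ ^ 2 = (x 0)^2 + (x 1)^2 + (x 2)^2 := by
  have h : ‖x‖ = Real.sqrt ((x 0)^2 + (x 1)^2 + (x 2)^2) := by
    rw [EuclideanSpace.norm_eq]
    simp [Fin.sum_univ_three, Real.norm_eq_abs, sq_abs]
  rw [h, Real.sq_sqrt (by positivity)]

lemma primitive_smooth (a : ℝ → ℝ) (ha : ContDiff ℝ (⊤ : ℕ∞) a) (c : ℝ) :
    ContDiff ℝ (⊤ : ℕ∞) (fun s : ℝ => ∫ t in c..s, a t) := by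
  have hacont : Continuous a := ha.continuous
  have hFderiv : ∀ s : ℝ, HasDerivAt (fun s : ℝ => ∫ t in c..s, a t) (a s) s := fun s =>
    intervalIntegral.integral_hasDerivAt_right (hacont.intervalIntegrable c s)
      (hacont.stronglyMeasurableAtFilter _ _) hacont.continuousAt
  rw [contDiff_infty_iff_deriv]
  refine ⟨fun s => (hFderiv s).differentiableAt, ?_⟩
  have : deriv (fun s : ℝ => ∫ t in c..s, a t) = a := funext fun s => (hFderiv s).deriv
  rw [this]; exact ha

/-- For `Ψ(x) = ∫_c^{φ_x} a(t) dt`, the function `Ψ` is `C^∞` on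
`ℝ³ ∖ {0}` (in particular also at the points of the `x₃`-axis, where `arccos` itself fails
to be differentiable, because `a` vanishes near the endpoints `0` and `π`). -/
theorem phase_smooth_away_from_origin (a : ℝ → ℝ) (ha : ContDiff ℝ (⊤ : ℕ∞) a)
    (hpos : ∀ t, 0 ≤ a t) (hcs : HasCompactSupport a)
    (hsupp : tsupport a ⊆ Set.Ioo 0 Real.pi) (c : ℝ) :
    ContDiffOn ℝ (⊤ : ℕ∞) (fun y : E3 => ∫ t in c..(colat y), a t)
      ({(0 : E3)}ᶜ) := by
  have hacont : Continuous a := ha.continuous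
  have hF : ContDiff ℝ (⊤ : ℕ∞) (fun s : ℝ => ∫ t in c..s, a t) := primitive_smooth a ha c
  intro x hx
  have hx0 : x ≠ 0 := hx
  have hnx : ‖x‖ ≠ 0 := norm_ne_zero_iff.mpr hx0
  suffices h : ContDiffAt ℝ (⊤ : ℕ∞) (fun y : E3 => ∫ t in c..(colat y), a t) x from
    h.contDiffWithinAt
  -- continuity of colat at x
  have hcolat_cont : ContinuousAt colat x := by
    exact Real.continuous_arccos.continuousAt.comp
      ((((EuclideanSpace.proj (2 : Fin 3) : E3 →L[ℝ] ℝ).continuous).continuousAt).div continuous_norm.continuousAt hnx)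
  by_cases hax : 0 < (x 0)^2 + (x 1)^2
  · -- off the axis: smooth composition
    have hlt : (x 2)^2 < ‖x‖^2 := by rw [norm_sq_E3]; linarith
    have habs : |x 2 / ‖x‖| < 1 := by
      rw [abs_div, abs_norm, div_lt_one (lt_of_le_of_ne (norm_nonneg x) (Ne.symm hnx))]
      nlinarith [sq_abs (x 2), abs_nonneg (x 2), norm_nonneg x]
    have h1 : x 2 / ‖x‖ ≠ 1 := fun h => by rw [h] at habs; simp at habs
    have h2 : x 2 / ‖x‖ ≠ -1 := fun h => by rw [h] at habs; simp at habs
    have hcolat : ContDiffAt ℝ (⊤ : ℕ∞) colat x := by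
      refine (Real.contDiffAt_arccos h2 h1).comp x ?_
      exact ((EuclideanSpace.proj (2 : Fin 3) : E3 →L[ℝ] ℝ).contDiff.contDiffAt).div
        (contDiffAt_norm ℝ hx0) hnx
    exact (hF.contDiffAt).comp x hcolat
  · -- on the axis: locally constant
    have hx1 : x 0 = 0 := by nlinarith [sq_nonneg (x 0), sq_nonneg (x 1)]
    have hx2 : x 1 = 0 := by nlinarith [sq_nonneg (x 0), sq_nonneg (x 1)]
    have hx3 : x 2 ≠ 0 := by
      intro h
      apply hx0
      ext i
      fin_cases i <;> simpa [hx1, hx2, h]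
    have hnormx : ‖x‖ = |x 2| := by
      have := norm_sq_E3 x
      rw [hx1, hx2] at this
      nlinarith [abs_nonneg (x 2), norm_nonneg x, sq_abs (x 2)]
    -- general local-constancy argument
    by_cases hK : tsupport a = ∅
    · have haz : a = 0 := by
        ext t
        by_contra h
        exact (Set.eq_empty_iff_forall_notMem.mp hK t) (subset_tsupport a h)
      have : (fun y : E3 => ∫ t in c..(colat y), a t) = fun _ => (0 : ℝ) := by
        funext y; rw [haz]; simp
      rw [this]; exact contDiffAt_const
    · have hKne : (tsupport a).Nonempty := Set.nonempty_iff_ne_empty.mpr hK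
      have hKcpt : IsCompact (tsupport a) := hcs
      rcases lt_or_gt_of_ne hx3 with hneg | hpos2
      · -- x 2 < 0 : colat x = π, a vanishes above sSup
        set δ := sSup (tsupport a) with hδ
        have hδmem : δ ∈ tsupport a := hKcpt.sSup_mem hKne
        have hδlt : δ < Real.pi := (hsupp hδmem).2
        have hcx : colat x = Real.pi := by
          unfold colat
          rw [hnormx, abs_of_neg hneg, div_neg, div_self (ne_of_lt hneg), Real.arccos_neg_one]
        have hev : ∀ᶠ y in 𝓝 x, colat y > δ := by
          have : Set.Ioi δ ∈ 𝓝 (colat x) := by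
            rw [hcx]; exact Ioi_mem_nhds hδlt
          exact hcolat_cont this
        refine ContDiffAt.congr_of_eventuallyEq (contDiffAt_const
          (c := ∫ t in c..Real.pi, a t)) ?_
        filter_upwards [hev] with y hy
        have hzero : ∀ t ∈ Set.uIcc Real.pi (colat y), a t = (0 : ℝ) := by
          intro t ht
          have h1 : δ < t := by
            rcases Set.mem_uIcc.mp ht with h | h
            · exact lt_of_lt_of_le hδlt h.1
            · exact lt_of_lt_of_le hy h.1
          apply image_eq_zero_of_notMem_tsupport
          intro hmem
          exact absurd (le_csSup hKcpt.bddAbove hmem) (not_le.mpr h1)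
        have : (∫ t in c..(colat y), a t) - (∫ t in c..Real.pi, a t)
            = ∫ t in Real.pi..(colat y), a t :=
          (intervalIntegral.integral_interval_sub_left
            (hacont.intervalIntegrable c (colat y))
            (hacont.intervalIntegrable c Real.pi))
        have hz : (∫ t in Real.pi..(colat y), a t) = 0 := by
          rw [intervalIntegral.integral_congr (g := fun _ => (0:ℝ)) hzero]
          simp
        linarith [this, hz]
      · -- x 2 > 0 : colat x = 0, a vanishes below sInf
        set ε := sInf (tsupport a) with hε
        have hεmem : ε ∈ tsupport a := hKcpt.sInf_mem hKne
        have hεpos : 0 < ε := (hsupp hεmem).1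
        have hcx : colat x = 0 := by
          unfold colat
          rw [hnormx, abs_of_pos hpos2, div_self (ne_of_gt hpos2), Real.arccos_one]
        have hev : ∀ᶠ y in 𝓝 x, colat y < ε := by
          have : Set.Iio ε ∈ 𝓝 (colat x) := by
            rw [hcx]; exact Iio_mem_nhds hεpos
          exact hcolat_cont this
        refine ContDiffAt.congr_of_eventuallyEq (contDiffAt_const
          (c := ∫ t in c..(0:ℝ), a t)) ?_
        filter_upwards [hev] with y hy
        have hzero : ∀ t ∈ Set.uIcc (0:ℝ) (colat y), a t = (0 : ℝ) := by
          intro t ht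
          have h1 : t < ε := by
            rcases Set.mem_uIcc.mp ht with h | h
            · exact lt_of_le_of_lt h.2 hy
            · exact lt_of_le_of_lt h.2 hεpos
          apply image_eq_zero_of_notMem_tsupport
          intro hmem
          exact absurd (csInf_le hKcpt.bddBelow hmem) (not_le.mpr h1)
        have : (∫ t in c..(colat y), a t) - (∫ t in c..(0:ℝ), a t)
            = ∫ t in (0:ℝ)..(colat y), a t :=
          (intervalIntegral.integral_interval_sub_left
            (hacont.intervalIntegrable c (colat y))
            (hacont.intervalIntegrable c 0))
        have hz : (∫ t in (0:ℝ)..(colat y), a t) = 0 := by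
          rw [intervalIntegral.integral_congr (g := fun _ => (0:ℝ)) hzero]
          simp
        linarith [this, hz]
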